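/- Let Γ be a finite directed graph with edge labels ≥ 3 containing no triangles. Then every embedded cycle of length 6 in the link L_Γ contains at least 2 middle edges. -/
import Mathlib


/-- The generators of the presentation `I_Γ` associated with a directed labeled graph
`Γ` on vertex set `ι`: a generator `xgen i j` for each directed edge `i → j`, a
generator `vgen i` for each vertex `i`, and generators `dgen i j k` (`3 ≤ k ≤ label`)
for each directed edge `i → j`. -/
inductive GammaGen (ι : Type*) where
  | xgen (i j : ι)
  | vgen (i : ι)
  | dgen (i j : ι) (k : ℕ)

/-- `gSeq i j k` is the generator `d_k` of the local piece of the edge `i → j`, where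
`d₁ = a_i`, `d₂ = a_j`, and `d_k` (`k ≥ 3`) are the extra generators. -/
def gSeq {ι : Type*} (i j : ι) (k : ℕ) : GammaGen ι :=
  if k = 1 then .vgen i else if k = 2 then .vgen j else .dgen i j k

/-- The triples `(w, g, h)` such that `w = g·h` is a relation of `I_Γ`: for each
directed edge `i → j` with label `m`, the cyclic relations `x_{ij} = d_k d_{k+1}`
(`1 ≤ k ≤ m`, indices mod `m`). -/
def relTriplesGamma {ι : Type*} (E : ι → ι → Prop) (lab : ι → ι → ℕ) :
    Set (GammaGen ι × GammaGen ι × GammaGen ι) :=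
  {t | ∃ i j, E i j ∧ ∃ k : ℕ, 1 ≤ k ∧ k ≤ lab i j ∧
        t = (.xgen i j, gSeq i j k, gSeq i j (k % lab i j + 1))}

/-- Vertices of the link `L_Γ`: a pair of vertices for each generator of `I_Γ`;
the Boolean is `true` for the barred vertex. -/
abbrev GammaVert (ι : Type*) := GammaGen ι × Bool

/-- Each relation `w = g·h` contributes the corner edges `{ḡ, h}`, `{w, g}`,
`{h̄, w̄}` to the link. -/
def linkRelGamma {ι : Type*} (E : ι → ι → Prop) (lab : ι → ι → ℕ)
    (u v : GammaVert ι) : Prop :=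
  ∃ t ∈ relTriplesGamma E lab,
    ((u, v) = ((t.2.1, true), (t.2.2, false)) ∨
     (u, v) = ((t.1, false), (t.2.1, false)) ∨
     (u, v) = ((t.2.2, true), (t.1, true)))

/-- The link `L_Γ` of the unique 0-cell of the 2-complex `K_Γ`. -/
def LinkGamma {ι : Type*} (E : ι → ι → Prop) (lab : ι → ι → ℕ) :
    SimpleGraph (GammaVert ι) :=
  SimpleGraph.fromRel (linkRelGamma E lab)

/-- Levels of link vertices: barred `x`-generators at level 1, barred others at
level 2, unbarred others at level 3, unbarred `x`-generators at level 4. -/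
def lvlGamma {ι : Type*} : GammaVert ι → ℕ
  | (.xgen _ _, true) => 1
  | (.xgen _ _, false) => 4
  | (_, true) => 2
  | (_, false) => 3

/-- A link edge is a middle edge when it joins a level-2 vertex to a level-3 vertex. -/
def IsMiddle {ι : Type*} (u v : GammaVert ι) : Prop :=
  (lvlGamma u = 2 ∧ lvlGamma v = 3) ∨ (lvlGamma u = 3 ∧ lvlGamma v = 2)

/-- Forbidden configuration of type A: a triangle of `Γ` with two edges oriented out
of a common vertex (equivalently, a triangle containing a directed path of length 2
whose third edge closes it up non-cyclically; both orientations of the third edge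
give isomorphic oriented graphs). -/
def TypeA {ι : Type*} (E : ι → ι → Prop) : Prop :=
  ∃ u v w : ι, u ≠ v ∧ u ≠ w ∧ v ≠ w ∧ E w u ∧ E w v ∧ (E u v ∨ E v u)

/-- Forbidden configuration of type B: four distinct vertices forming a 4-cycle with
alternating orientations. -/
def TypeB {ι : Type*} (E : ι → ι → Prop) : Prop :=
  ∃ p q r s : ι, p ≠ q ∧ p ≠ r ∧ p ≠ s ∧ q ≠ r ∧ q ≠ s ∧ r ≠ s ∧
    E q p ∧ E q r ∧ E s p ∧ E s r

/-- `Γ` contains no triangles (as an undirected graph). -/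
def TriangleFree {ι : Type*} (E : ι → ι → Prop) : Prop :=
  ¬∃ u v w : ι, u ≠ v ∧ u ≠ w ∧ v ≠ w ∧
    (E u v ∨ E v u) ∧ (E v w ∨ E w v) ∧ (E u w ∨ E w u)

instance {ι : Type*} (u v : GammaVert ι) : Decidable (IsMiddle u v) := by
  unfold IsMiddle; infer_instance

section Aux
variable {ι : Type*}

lemma gSeq_ne_xgen (i j : ι) (k : ℕ) (p q : ι) : gSeq i j k ≠ .xgen p q := by
  unfold gSeq; split_ifs <;> simp

lemma lvl_gSeq (i j : ι) (k : ℕ) (b : Bool) :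
    lvlGamma (gSeq i j k, b) = if b then 2 else 3 := by
  cases b <;> unfold gSeq <;> split_ifs <;> first | rfl | simp_all

lemma gSeq_two_edges {i1 j1 i2 j2 : ι} {k1 k2 : ℕ}
    (hne : ¬(i1 = i2 ∧ j1 = j2))
    (heq : gSeq i1 j1 k1 = gSeq i2 j2 k2) :
    ∃ a, gSeq i1 j1 k1 = GammaGen.vgen a ∧ (a = i1 ∨ a = j1) ∧ (a = i2 ∨ a = j2) := by
  unfold gSeq at heq ⊢
  split_ifs at heq ⊢ <;> simp_all

def SEdge (E : ι → ι → Prop) (lab : ι → ι → ℕ) (u v : GammaVert ι) : Prop :=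
  ∃ i j, ∃ k : ℕ, ∃ b : Bool, E i j ∧ 1 ≤ k ∧ k ≤ lab i j ∧
    ((u = (.xgen i j, b) ∧ v = (gSeq i j k, b)) ∨
     (v = (.xgen i j, b) ∧ u = (gSeq i j k, b)))

lemma adj_struct {E : ι → ι → Prop} {lab : ι → ι → ℕ} {u v : GammaVert ι}
    (h : (LinkGamma E lab).Adj u v) : IsMiddle u v ∨ SEdge E lab u v := by
  rw [LinkGamma, SimpleGraph.fromRel_adj] at h
  obtain ⟨hne, h | h⟩ := h <;>
  · obtain ⟨t, ⟨i, j, hE, k, hk1, hk2, rfl⟩, hc⟩ := h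
    have hmlt : k % lab i j < lab i j := Nat.mod_lt _ (by omega)
    rcases hc with hc | hc | hc <;> simp only [Prod.mk.injEq] at hc <;>
      obtain ⟨rfl, rfl⟩ := hc
    · exact Or.inl (by simp [IsMiddle, lvl_gSeq])
    · exact Or.inr ⟨i, j, k, false, hE, hk1, hk2, by simp⟩
    · exact Or.inr ⟨i, j, k % lab i j + 1, true, hE, by omega, by omega, by simp⟩

end Aux

section Aux2
variable {ι : Type*}

lemma lvl_x (i j : ι) (b : Bool) :
    lvlGamma ((GammaGen.xgen i j : GammaGen ι), b) = if b then 1 else 4 := by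
  cases b <;> rfl

def clsV (u : GammaVert ι) : Bool := decide (lvlGamma u ≤ 2)

lemma adj_cls {E : ι → ι → Prop} {lab : ι → ι → ℕ} {u v : GammaVert ι}
    (h : (LinkGamma E lab).Adj u v) :
    clsV v = xor (clsV u) (decide (IsMiddle u v)) := by
  rcases adj_struct h with hm | ⟨i, j, k, b, hE, -, -, hd⟩
  · have hm' := hm
    rcases hm' with ⟨h1, h2⟩ | ⟨h1, h2⟩ <;> simp [clsV, h1, h2, hm]
  · have hnm : ¬ IsMiddle u v := by
      rcases hd with ⟨rfl, rfl⟩ | ⟨rfl, rfl⟩ <;> cases b <;>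
        simp [IsMiddle, lvl_gSeq, lvl_x]
    rcases hd with ⟨rfl, rfl⟩ | ⟨rfl, rfl⟩ <;> cases b <;>
      simp [clsV, lvl_gSeq, lvl_x, hnm]

lemma pairE {E : ι → ι → Prop} {i j a b : ι} (hE : E i j) (hab : a ≠ b)
    (ha : a = i ∨ a = j) (hb : b = i ∨ b = j) : E a b ∨ E b a := by
  rcases ha with rfl | rfl <;> rcases hb with rfl | rfl <;> tauto

lemma hexX {E : ι → ι → Prop} {lab : ι → ι → ℕ}
    (hirr : ∀ i, ¬E i i) (htf : TriangleFree E)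
    {v0 v1 v2 v3 v4 v5 : GammaVert ι}
    (d02 : v0 ≠ v2) (d24 : v2 ≠ v4) (d04 : v0 ≠ v4)
    (d13 : v1 ≠ v3) (d35 : v3 ≠ v5) (d15 : v1 ≠ v5)
    (e0 : SEdge E lab v0 v1) (e1 : SEdge E lab v1 v2)
    (e2 : SEdge E lab v2 v3) (e3 : SEdge E lab v3 v4)
    (e4 : SEdge E lab v4 v5) (e5 : SEdge E lab v5 v0)
    (hx : ∃ p q, ∃ c : Bool, v0 = (GammaGen.xgen p q, c)) : False := by
  obtain ⟨p, q, c, hv0⟩ := hx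
  -- edge 0 : v0 is the x-side
  obtain ⟨i0, j0, k0, b0, hE0, -, -, ⟨hu0, hv1⟩ | ⟨-, hu0⟩⟩ := e0
  swap
  · exact gSeq_ne_xgen _ _ _ _ _ (congrArg Prod.fst (hu0.symm.trans hv0))
  clear hv0
  -- edge 1 : v2 is the x-side
  obtain ⟨i1, j1, k1, b1, hE1, -, -, ⟨hw1, -⟩ | ⟨hv2, hw1⟩⟩ := e1
  · exact gSeq_ne_xgen _ _ _ _ _ (congrArg Prod.fst (hv1.symm.trans hw1))
  have h1 := hv1.symm.trans hw1
  rw [Prod.mk.injEq] at h1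
  obtain ⟨hg1, hb1⟩ := h1
  -- edge 2 : v2 is the x-side
  obtain ⟨i2, j2, k2, b2, hE2, -, -, ⟨hu2, hv3⟩ | ⟨-, hu2⟩⟩ := e2
  swap
  · exact gSeq_ne_xgen _ _ _ _ _ (congrArg Prod.fst (hu2.symm.trans hv2))
  have h2 := hv2.symm.trans hu2
  rw [Prod.mk.injEq, GammaGen.xgen.injEq] at h2
  obtain ⟨⟨ha, hb⟩, hc⟩ := h2
  rw [← ha, ← hb] at hE2
  rw [← ha, ← hb, ← hc] at hv3
  clear hu2 ha hb hc
  -- edge 3 : v4 is the x-side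
  obtain ⟨i3, j3, k3, b3, hE3, -, -, ⟨hw3, -⟩ | ⟨hv4, hw3⟩⟩ := e3
  · exact gSeq_ne_xgen _ _ _ _ _ (congrArg Prod.fst (hv3.symm.trans hw3))
  have h3 := hv3.symm.trans hw3
  rw [Prod.mk.injEq] at h3
  obtain ⟨hg3, hb3⟩ := h3
  -- edge 4 : v4 is the x-side
  obtain ⟨i4, j4, k4, b4, hE4, -, -, ⟨hu4, hv5⟩ | ⟨-, hu4⟩⟩ := e4
  swap
  · exact gSeq_ne_xgen _ _ _ _ _ (congrArg Prod.fst (hu4.symm.trans hv4))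
  have h4 := hv4.symm.trans hu4
  rw [Prod.mk.injEq, GammaGen.xgen.injEq] at h4
  obtain ⟨⟨ha, hb⟩, hc⟩ := h4
  rw [← ha, ← hb] at hE4
  rw [← ha, ← hb, ← hc] at hv5
  clear hu4 ha hb hc
  -- edge 5 : v0 is the x-side
  obtain ⟨i5, j5, k5, b5, hE5, -, -, ⟨hw5, -⟩ | ⟨hv0', hw5⟩⟩ := e5
  · exact gSeq_ne_xgen _ _ _ _ _ (congrArg Prod.fst (hv5.symm.trans hw5))
  have h5 := hv0'.symm.trans hu0
  rw [Prod.mk.injEq, GammaGen.xgen.injEq] at h5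
  obtain ⟨⟨ha, hb⟩, hc⟩ := h5
  rw [ha, hb, hc] at hw5
  clear hv0' ha hb hc
  have h5' := hv5.symm.trans hw5
  rw [Prod.mk.injEq] at h5'
  obtain ⟨hg5, hb5⟩ := h5'
  -- x-pairs are distinct
  have hp01 : ¬(i0 = i1 ∧ j0 = j1) := by
    rintro ⟨rfl, rfl⟩; exact d02 (by rw [hu0, hv2, hb1])
  have hp13 : ¬(i1 = i3 ∧ j1 = j3) := by
    rintro ⟨rfl, rfl⟩; exact d24 (by rw [hv2, hv4, hb3])
  have hp30 : ¬(i3 = i0 ∧ j3 = j0) := by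
    rintro ⟨rfl, rfl⟩; exact d04 (by rw [hu0, hv4, hb1, hb3])
  -- common vertices
  obtain ⟨a0, ha0, ha0l, ha0r⟩ := gSeq_two_edges hp01 hg1
  obtain ⟨a1, ha1, ha1l, ha1r⟩ := gSeq_two_edges hp13 hg3
  obtain ⟨a2, ha2, ha2l, ha2r⟩ := gSeq_two_edges hp30 hg5
  -- the aᵢ are distinct
  have hna01 : a0 ≠ a1 := by
    rintro rfl; apply d13; rw [hv1, hv3, ha0, ha1, hb1]
  have hna12 : a1 ≠ a2 := by
    rintro rfl; apply d35; rw [hv3, hv5, ha1, ha2, hb3]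
  have hna02 : a0 ≠ a2 := by
    rintro rfl; apply d15; rw [hv1, hv5, ha0, ha2, hb1, hb3]
  exact htf ⟨a0, a1, a2, hna01, hna02, hna12,
    pairE hE1 hna01 ha0r ha1l,
    pairE hE3 hna12 ha1r ha2l,
    pairE hE0 hna02 ha0l ha2r⟩

end Aux2

section Aux3
variable {ι : Type*}

lemma hexFull {E : ι → ι → Prop} {lab : ι → ι → ℕ}
    (hirr : ∀ i, ¬E i i) (htf : TriangleFree E)
    {v0 v1 v2 v3 v4 v5 : GammaVert ι}
    (d02 : v0 ≠ v2) (d24 : v2 ≠ v4) (d04 : v0 ≠ v4)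
    (d13 : v1 ≠ v3) (d35 : v3 ≠ v5) (d15 : v1 ≠ v5)
    (e0 : SEdge E lab v0 v1) (e1 : SEdge E lab v1 v2)
    (e2 : SEdge E lab v2 v3) (e3 : SEdge E lab v3 v4)
    (e4 : SEdge E lab v4 v5) (e5 : SEdge E lab v5 v0) : False := by
  by_cases hx : ∃ p q, ∃ c : Bool, v0 = (GammaGen.xgen p q, c)
  · exact hexX hirr htf d02 d24 d04 d13 d35 d15 e0 e1 e2 e3 e4 e5 hx
  · have hx1 : ∃ p q, ∃ c : Bool, v1 = (GammaGen.xgen p q, c) := by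
      obtain ⟨i, j, k, b, hE, -, -, ⟨h1, -⟩ | ⟨h1, -⟩⟩ := e0
      · exact absurd ⟨i, j, b, h1⟩ hx
      · exact ⟨i, j, b, h1⟩
    exact hexX hirr htf d13 d35 d15 d24 d04.symm d02.symm
      e1 e2 e3 e4 e5 e0 hx1

lemma xor_cycle6 {c0 c1 c2 c3 c4 c5 m0 m1 m2 m3 m4 m5 : Bool}
    (e0 : c1 = xor c0 m0) (e1 : c2 = xor c1 m1) (e2 : c3 = xor c2 m2)
    (e3 : c4 = xor c3 m3) (e4 : c5 = xor c4 m4) (e5 : c0 = xor c5 m5) :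
    xor m0 (xor m1 (xor m2 (xor m3 (xor m4 m5)))) = false := by
  subst e0 e1 e2 e3 e4
  cases c0 <;> cases m0 <;> cases m1 <;> cases m2 <;> cases m3 <;> cases m4 <;>
    simp_all

lemma two_le_filter_six {α : Type*} (p : α → Bool) (a0 a1 a2 a3 a4 a5 : α)
    (hne : ¬(p a0 = false ∧ p a1 = false ∧ p a2 = false ∧ p a3 = false ∧
             p a4 = false ∧ p a5 = false))
    (hpar : xor (p a0) (xor (p a1) (xor (p a2) (xor (p a3)
              (xor (p a4) (p a5))))) = false) :
    2 ≤ (List.filter p [a0, a1, a2, a3, a4, a5]).length := by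
  cases h0 : p a0 <;> cases h1 : p a1 <;> cases h2 : p a2 <;> cases h3 : p a3 <;>
    cases h4 : p a4 <;> cases h5 : p a5 <;> simp_all [List.filter]

end Aux3

/-- If `Γ` is a finite directed simple graph with edge labels at least 3
and no triangles, then every embedded cycle of length 6 in `L_Γ` contains at least 2
middle edges. -/
theorem six_cycles_two_middle {ι : Type*} [Fintype ι] [DecidableEq ι]
    (E : ι → ι → Prop) (lab : ι → ι → ℕ)
    (hirr : ∀ i, ¬E i i) (hsimple : ∀ i j, E i j → ¬E j i)
    (hlab : ∀ i j, E i j → 3 ≤ lab i j) (htf : TriangleFree E) :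
    ∀ (v : GammaVert ι) (w : (LinkGamma E lab).Walk v v),
      w.IsCycle → w.length = 6 →
        2 ≤ (w.darts.filter
              (fun d => decide (IsMiddle d.toProd.1 d.toProd.2))).length := by
  intro v w hc hl
  cases w with
  | nil => simp at hl
  | cons h0 p =>
  rename_i x1
  cases p with
  | nil => simp at hl
  | cons h1 p =>
  rename_i x2
  cases p with
  | nil => simp at hl
  | cons h2 p =>
  rename_i x3
  cases p with
  | nil => simp at hl
  | cons h3 p =>
  rename_i x4
  cases p with
  | nil => simp at hl
  | cons h4 p =>
  rename_i x5
  cases p with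
  | nil => simp at hl
  | cons h5 p =>
  rename_i x6
  cases p with
  | cons h6 p => simp [SimpleGraph.Walk.length_cons] at hl
  | nil =>
  have hnd := hc.2
  simp [SimpleGraph.Walk.support_cons, List.nodup_cons] at hnd
  obtain ⟨⟨n12, n13, n14, n15, n1v⟩, ⟨n23, n24, n25, n2v⟩, ⟨n34, n35, n3v⟩,
    ⟨n45, n4v⟩, n5v⟩ := hnd
  simp only [SimpleGraph.Walk.darts_cons, SimpleGraph.Walk.darts_nil]
  refine two_le_filter_six _ _ _ _ _ _ _ ?_ ?_
  · rintro ⟨m0, m1, m2, m3, m4, m5⟩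
    simp only [decide_eq_false_iff_not] at m0 m1 m2 m3 m4 m5
    exact hexFull hirr htf
      (fun h => n2v h.symm) n24 (fun h => n4v h.symm) n13 n35 n15
      ((adj_struct h0).resolve_left m0) ((adj_struct h1).resolve_left m1)
      ((adj_struct h2).resolve_left m2) ((adj_struct h3).resolve_left m3)
      ((adj_struct h4).resolve_left m4) ((adj_struct h5).resolve_left m5)
  · exact xor_cycle6 (adj_cls h0) (adj_cls h1) (adj_cls h2) (adj_cls h3)
      (adj_cls h4) (adj_cls h5)
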